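/- Let n ≥ 3 and let D_{2n} be the dihedral group of order 2n. Then for every r ≥ 1, the number of r-tuples of pairwise commuting elements in D_{2n} equals n^r + n·gcd(n,2)^{r−1}·(2^r − 1). -/

import Mathlib

/-- The set of `r`-tuples of pairwise commuting elements of `G`. -/
def CommTuple (r : ℕ) (G : Type*) [Group G] : Type _ :=
  {x : Fin r → G // ∀ i j, Commute (x i) (x j)}

/-- `P r G = |Comm_r(G)| / |G|^r`. -/
noncomputable def P (r : ℕ) (G : Type*) [Group G] : ℝ :=
  (Nat.card (CommTuple r G) : ℝ) / (Nat.card G : ℝ) ^ r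

namespace Stmt16Aux

open Finset

variable {n : ℕ}

/-- Whether an element of the dihedral group is a reflection. -/
def isRefl : DihedralGroup n → Bool
  | .r _ => false
  | .sr _ => true

lemma isRefl_eq_false {g : DihedralGroup n} : isRefl g = false ↔ ∃ a, g = .r a := by
  cases g <;> simp [isRefl]

lemma isRefl_eq_true {g : DihedralGroup n} : isRefl g = true ↔ ∃ a, g = .sr a := by
  cases g <;> simp [isRefl]

lemma commute_r_r (i j : ZMod n) : Commute (DihedralGroup.r i) (DihedralGroup.r j) := by
  simp [Commute, SemiconjBy, add_comm]

lemma commute_r_sr (i j : ZMod n) :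
    Commute (DihedralGroup.r i) (DihedralGroup.sr j) ↔ i + i = 0 := by
  simp only [Commute, SemiconjBy, DihedralGroup.r_mul_sr, DihedralGroup.sr_mul_r,
    DihedralGroup.sr.injEq]
  constructor <;> intro h <;> linear_combination -h

lemma commute_sr_sr (i j : ZMod n) :
    Commute (DihedralGroup.sr i) (DihedralGroup.sr j) ↔ (j - i) + (j - i) = 0 := by
  simp only [Commute, SemiconjBy, DihedralGroup.sr_mul_sr, DihedralGroup.r.injEq]
  constructor <;> intro h <;> linear_combination h

/-- The 2-torsion of `ZMod n`, as a `Finset`. -/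
def S (n : ℕ) [NeZero n] : Finset (ZMod n) := univ.filter (fun x => x + x = 0)

lemma card_S (n : ℕ) [NeZero n] : (S n).card = Nat.gcd n 2 := by
  rcases Nat.even_or_odd n with he | ho
  · obtain ⟨m, hm⟩ := he
    have hm1 : 1 ≤ m := by have := NeZero.pos n; omega
    have hgcd : Nat.gcd n 2 = 2 := by
      rw [Nat.gcd_comm]; exact Nat.gcd_eq_left ⟨m, by omega⟩
    have hS : S n = {0, (m : ZMod n)} := by
      ext x
      simp only [S, mem_filter, mem_univ, true_and, mem_insert, mem_singleton]
      constructor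
      · intro hx
        have hv : ((x.val + x.val : ℕ) : ZMod n) = 0 := by
          push_cast
          rw [ZMod.natCast_val, ZMod.cast_id]
          exact hx
        rw [ZMod.natCast_eq_zero_iff] at hv
        have hlt : x.val < n := ZMod.val_lt x
        have : x.val = 0 ∨ x.val = m := by
          obtain ⟨k, hk⟩ := hv
          have h2 : x.val + x.val = m * k + m * k := by rw [hk, hm]; ring
          have hvk : x.val = m * k := by omega
          rcases Nat.lt_or_ge k 2 with hk2 | hk2
          · interval_cases k
            · left; omega
            · right; omega
          · exfalso
            have : m * 2 ≤ m * k := Nat.mul_le_mul_left m hk2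
            omega
        rcases this with h | h
        · left
          have := (ZMod.natCast_eq_zero_iff x.val n).mpr ?_
          · rwa [ZMod.natCast_val, ZMod.cast_id] at this
          · rw [h]; exact Dvd.intro 0 rfl
        · right
          have : ((x.val : ℕ) : ZMod n) = (m : ZMod n) := by rw [h]
          rwa [ZMod.natCast_val, ZMod.cast_id] at this
      · rintro (h | h)
        · simp [h]
        · rw [h, ← Nat.cast_add]
          have : ((m + m : ℕ) : ZMod n) = ((n : ℕ) : ZMod n) := by rw [show m + m = n by omega]
          rw [this, ZMod.natCast_self]
    rw [hS, hgcd]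
    rw [card_insert_of_notMem, card_singleton]
    simp only [mem_singleton]
    intro h
    have : ((m : ℕ) : ZMod n).val = m := ZMod.val_cast_of_lt (by omega)
    rw [← h] at this
    simp [ZMod.val_zero] at this
    omega
  · have hgcd : Nat.gcd n 2 = 1 := Nat.Coprime.gcd_eq_one (ho.coprime_two_right)
    have hS : S n = {0} := by
      ext x
      simp only [S, mem_filter, mem_univ, true_and, mem_singleton]
      constructor
      · intro hx
        have h2 : IsUnit (2 : ZMod n) := by
          have := (ZMod.isUnit_iff_coprime 2 n).mpr (ho.coprime_two_left)
          simpa using this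
        have : (2 : ZMod n) * x = 0 := by rw [two_mul]; exact hx
        exact (h2.mul_right_eq_zero).mp this
      · rintro rfl; simp
    rw [hS, hgcd, card_singleton]

instance {G : Type*} [Mul G] [DecidableEq G] (a b : G) : Decidable (Commute a b) :=
  decidable_of_iff (a * b = b * a) Iff.rfl

lemma r_injective : Function.Injective (DihedralGroup.r : ZMod n → DihedralGroup n) :=
  fun a b h => by injection h

lemma fiber_false [NeZero n] (r : ℕ) :
    (((Finset.univ : Finset (Fin r → DihedralGroup n)).filter
        fun x => ∀ i j, Commute (x i) (x j)).filter
        fun x => (fun i => isRefl (x i)) = fun _ => false).card = n ^ r := by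
  classical
  have key : (((Finset.univ : Finset (Fin r → DihedralGroup n)).filter
        fun x => ∀ i j, Commute (x i) (x j)).filter
        fun x => (fun i => isRefl (x i)) = fun _ => false)
      = Fintype.piFinset (fun _ : Fin r => (univ : Finset (ZMod n)).image DihedralGroup.r) := by
    ext x
    simp only [mem_filter, mem_univ, true_and, Fintype.mem_piFinset, mem_image, funext_iff]
    constructor
    · rintro ⟨_, h⟩ i
      obtain ⟨a, ha⟩ := isRefl_eq_false.mp (h i)
      exact ⟨a, ha.symm⟩
    · intro h
      have h' : ∀ i, ∃ a, x i = DihedralGroup.r a := fun i => by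
        obtain ⟨a, ha⟩ := h i; exact ⟨a, ha.symm⟩
      constructor
      · intro i j
        obtain ⟨a, ha⟩ := h' i; obtain ⟨b, hb⟩ := h' j
        rw [ha, hb]; exact commute_r_r a b
      · intro i
        obtain ⟨a, ha⟩ := h' i; rw [ha]; rfl
  rw [key, Fintype.card_piFinset]
  simp [card_image_of_injective _ (r_injective (n := n))]

lemma fiber_true [NeZero n] {r : ℕ} (t : Fin r → Bool) (i₀ : Fin r) (h₀ : t i₀ = true) :
    (((Finset.univ : Finset (Fin r → DihedralGroup n)).filter
        fun x => ∀ i j, Commute (x i) (x j)).filter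
        fun x => (fun i => isRefl (x i)) = t).card = n * (S n).card ^ (r - 1) := by
  classical
  set A : ZMod n → Fin r → Finset (DihedralGroup n) := fun a₀ i =>
    if i = i₀ then {DihedralGroup.sr a₀}
    else if t i then (S n).image (fun s => DihedralGroup.sr (a₀ + s))
    else (S n).image DihedralGroup.r with hA
  have key : (((Finset.univ : Finset (Fin r → DihedralGroup n)).filter
        fun x => ∀ i j, Commute (x i) (x j)).filter
        fun x => (fun i => isRefl (x i)) = t)
      = univ.biUnion (fun a₀ : ZMod n => Fintype.piFinset (A a₀)) := by
    ext x
    simp only [mem_filter, mem_univ, true_and, mem_biUnion, Fintype.mem_piFinset, funext_iff, hA]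
    constructor
    · rintro ⟨hc, ht⟩
      obtain ⟨a₀, ha₀⟩ := isRefl_eq_true.mp ((ht i₀).trans h₀)
      refine ⟨a₀, fun i => ?_⟩
      by_cases hi : i = i₀
      · rw [if_pos hi, mem_singleton, hi, ha₀]
      · rw [if_neg hi]
        have hcomm := hc i i₀
        rw [ha₀] at hcomm
        by_cases hti : t i = true
        · rw [if_pos hti]
          obtain ⟨b, hb⟩ := isRefl_eq_true.mp ((ht i).trans hti)
          rw [hb] at hcomm
          have h2 := (commute_sr_sr b a₀).mp hcomm
          refine mem_image.mpr ⟨b - a₀, ?_, ?_⟩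
          · exact mem_filter.mpr ⟨mem_univ _, by linear_combination -h2⟩
          · rw [hb]; congr 1; ring
        · rw [if_neg hti]
          have hfi : t i = false := by simpa using hti
          obtain ⟨c, hcEq⟩ := isRefl_eq_false.mp ((ht i).trans hfi)
          rw [hcEq] at hcomm
          have h2 := (commute_r_sr c a₀).mp hcomm
          exact mem_image.mpr ⟨c, mem_filter.mpr ⟨mem_univ _, h2⟩, hcEq.symm⟩
    · rintro ⟨a₀, hx⟩
      have hxi : ∀ i, (t i = true ∧ ∃ s, s + s = 0 ∧ x i = DihedralGroup.sr (a₀ + s)) ∨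
          (t i = false ∧ ∃ c, c + c = 0 ∧ x i = DihedralGroup.r c) := by
        intro i
        have hxi := hx i
        by_cases hi : i = i₀
        · rw [if_pos hi, mem_singleton] at hxi
          exact Or.inl ⟨hi ▸ h₀, 0, by ring, by rw [hxi, add_zero]⟩
        · rw [if_neg hi] at hxi
          by_cases hti : t i = true
          · rw [if_pos hti] at hxi
            obtain ⟨s, hs, hval⟩ := mem_image.mp hxi
            exact Or.inl ⟨hti, s, (mem_filter.mp hs).2, hval.symm⟩
          · rw [if_neg hti] at hxi
            obtain ⟨c, hc, hval⟩ := mem_image.mp hxi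
            exact Or.inr ⟨by simpa using hti, c, (mem_filter.mp hc).2, hval.symm⟩
      constructor
      · intro i j
        rcases hxi i with ⟨-, s, hs, hv⟩ | ⟨-, c, hc, hv⟩ <;>
          rcases hxi j with ⟨-, s', hs', hv'⟩ | ⟨-, c', hc', hv'⟩ <;> rw [hv, hv']
        · exact (commute_sr_sr _ _).mpr (by linear_combination hs' - hs)
        · exact ((commute_r_sr _ _).mpr hc').symm
        · exact (commute_r_sr _ _).mpr hc
        · exact commute_r_r _ _
      · intro i
        rcases hxi i with ⟨hti, s, hs, hv⟩ | ⟨hti, c, hc, hv⟩ <;> rw [hv, hti] <;> rfl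
  rw [key, card_biUnion]
  · have hcard : ∀ a₀ : ZMod n, (Fintype.piFinset (A a₀)).card = (S n).card ^ (r - 1) := by
      intro a₀
      rw [Fintype.card_piFinset]
      have h1 : ∀ i, (A a₀ i).card = if i = i₀ then 1 else (S n).card := by
        intro i
        by_cases hi : i = i₀
        · simp [hA, hi]
        · rw [hA]
          simp only [if_neg hi]
          by_cases hti : t i = true
          · rw [if_pos hti, card_image_of_injective _
              (fun a b h => by injection h with h2; exact add_left_cancel h2)]
          · rw [if_neg hti, card_image_of_injective _ (r_injective (n := n))]
      calc ∏ i, (A a₀ i).card = ∏ i, (if i = i₀ then 1 else (S n).card) :=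
            prod_congr rfl fun i _ => h1 i
        _ = (S n).card ^ (r - 1) := by
            rw [← Finset.mul_prod_erase univ _ (mem_univ i₀), if_pos rfl, one_mul,
              Finset.prod_congr rfl (fun i hi => if_neg (Finset.ne_of_mem_erase hi)),
              prod_const, card_erase_of_mem (mem_univ i₀), card_univ, Fintype.card_fin]
    rw [Finset.sum_congr rfl fun a₀ _ => hcard a₀, sum_const, card_univ, ZMod.card, smul_eq_mul]
  · intro a₀ _ a₁ _ hne
    rw [Function.onFun, Finset.disjoint_left]
    intro x hx hx'
    have h1 := (Fintype.mem_piFinset.mp hx) i₀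
    have h2 := (Fintype.mem_piFinset.mp hx') i₀
    simp only [hA, if_pos rfl, mem_singleton] at h1 h2
    have h3 : DihedralGroup.sr a₀ = DihedralGroup.sr a₁ := h1.symm.trans h2
    injection h3 with h4
    exact hne h4

end Stmt16Aux

theorem stmt16 (n : ℕ) (hn : 3 ≤ n) (r : ℕ) (hr : 1 ≤ r) :
    Nat.card (CommTuple r (DihedralGroup n)) =
      n ^ r + n * Nat.gcd n 2 ^ (r - 1) * (2 ^ r - 1) := by
  haveI : NeZero n := ⟨by omega⟩
  have hcard : Nat.card (CommTuple r (DihedralGroup n)) =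
      ((Finset.univ : Finset (Fin r → DihedralGroup n)).filter
        fun x => ∀ i j, Commute (x i) (x j)).card := by
    rw [show Nat.card (CommTuple r (DihedralGroup n)) =
        Nat.card {x : Fin r → DihedralGroup n // ∀ i j, Commute (x i) (x j)} from rfl,
      Nat.card_eq_fintype_card, Fintype.card_subtype]
  rw [hcard]
  rw [Finset.card_eq_sum_card_fiberwise
    (f := fun (x : Fin r → DihedralGroup n) => (fun i => Stmt16Aux.isRefl (x i)))
    (t := (Finset.univ : Finset (Fin r → Bool))) (fun x _ => Finset.mem_univ _)]
  rw [← Finset.add_sum_erase _ _ (Finset.mem_univ (fun _ : Fin r => false))]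
  have hfib' : ∀ t ∈ (Finset.univ : Finset (Fin r → Bool)).erase (fun _ => false),
      (((Finset.univ : Finset (Fin r → DihedralGroup n)).filter
        fun x => ∀ i j, Commute (x i) (x j)).filter
        fun x => (fun i => Stmt16Aux.isRefl (x i)) = t).card
        = n * Nat.gcd n 2 ^ (r - 1) := by
    intro t ht
    have hne := Finset.ne_of_mem_erase ht
    obtain ⟨i₀, h₀⟩ : ∃ i, t i = true := by
      by_contra h
      push_neg at h
      exact hne (funext fun i => by simpa using h i)
    rw [Stmt16Aux.fiber_true t i₀ h₀, Stmt16Aux.card_S]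
  rw [Finset.sum_congr rfl hfib', Finset.sum_const, Stmt16Aux.fiber_false,
    Finset.card_erase_of_mem (Finset.mem_univ _), Finset.card_univ, smul_eq_mul]
  have hcb : Fintype.card (Fin r → Bool) = 2 ^ r := by simp
  rw [hcb]
  congr 1
  rw [mul_comm]
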